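/- Let G be a finite simple graph on vertex set V = {1,…,N} with graph Laplacian Δ, let η > 0 and 0 < T⁰ < T, and let S ⊆ V be both strategic and dominantly absorbent, with E = V ∖ S. Let F^{sour} : [0,T] → ℝ^N be continuous, and for i = 1,2 let F^{dis,i} : [0,T] → ℝ^N be continuous with F^{dis,i}(t) = 0 for all t ∈ [0,T⁰] and with component (F^{dis,i})_n(t) = 0 for every n ∈ S and all t ∈ [0,T]. Let X^{(i)} : [0,T] → ℝ^N be twice continuously differentiable and satisfy (X^{(i)})''(t) + η (X^{(i)})'(t) − Δ X^{(i)}(t) = F^{sour}(t) + F^{dis,i}(t) for all t ∈ [0,T]. If x^{(1)}_n(t) = x^{(2)}_n(t) for all t ∈ [0,T] and every n ∈ S, then F^{dis,1}(t) = F^{dis,2}(t) for all t ∈ [0,T]. -/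
import Mathlib


/-- The graph Laplacian of a finite simple graph on `Fin N`. -/
def graphLaplacian {N : ℕ} (G : SimpleGraph (Fin N)) [DecidableRel G.Adj] :
    Matrix (Fin N) (Fin N) ℝ :=
  Matrix.of fun k l => if k = l then -(G.degree k : ℝ) else if G.Adj k l then 1 else 0

/-- A set `S` of vertices is *strategic*. -/
def Strategic {N : ℕ} (Δ : Matrix (Fin N) (Fin N) ℝ) (S : Finset (Fin N)) : Prop :=
  ∀ (μ : ℝ) (m : ℕ) (v : Fin m → (Fin N → ℝ)),
    (∀ q, v q ∈ Module.End.eigenspace (Matrix.toLin' Δ) μ) →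
    LinearIndependent ℝ v →
    Submodule.span ℝ (Set.range v) = Module.End.eigenspace (Matrix.toLin' Δ) μ →
    ∃ i : Fin m → Fin N, (∀ p, i p ∈ S) ∧
      IsUnit (Matrix.of fun p q : Fin m => v q (i p))

/-- Full column rank makes `mulVec` injective. -/
lemma mulVec_injective_of_rank {m n : Type*} [Fintype m] [Fintype n]
    (M : Matrix m n ℝ) (h : M.rank = Fintype.card n) :
    Function.Injective M.mulVec := by
  have hker : LinearMap.ker M.mulVecLin = ⊥ := by
    have hrn := LinearMap.finrank_range_add_finrank_ker M.mulVecLin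
    rw [Module.finrank_pi] at hrn
    have : Module.finrank ℝ (LinearMap.ker M.mulVecLin) = 0 := by
      have : M.rank + Module.finrank ℝ (LinearMap.ker M.mulVecLin) = Fintype.card n := hrn
      omega
    exact Submodule.finrank_eq_zero.mp this
  intro x y hxy
  have : M.mulVecLin x = M.mulVecLin y := hxy
  exact LinearMap.ker_eq_bot.mp hker this

/-- Identifiability of disturbances with a strategic, dominantly absorbent observation set:
two disturbances vanishing on `[0,T⁰]` and supported away from `S` that produce the same
observations on `S` throughout `[0,T]` must coincide on `[0,T]`. -/
theorem disturbance_identifiability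
    {N : ℕ} (G : SimpleGraph (Fin N)) [DecidableRel G.Adj]
    (η T0 T : ℝ) (hη : 0 < η) (hT0 : 0 < T0) (hT : T0 < T)
    (S : Finset (Fin N)) (hstrat : Strategic (graphLaplacian G) S)
    (hdomabs : ((graphLaplacian G).submatrix
        (fun s : {x // x ∈ S} => (s : Fin N))
        (fun e : {x // x ∈ Sᶜ} => (e : Fin N))).rank = Sᶜ.card)
    (Fsour Fdis₁ Fdis₂ : ℝ → (Fin N → ℝ))
    (hFsour : ContinuousOn Fsour (Set.Icc (0:ℝ) T))
    (hFdis₁ : ContinuousOn Fdis₁ (Set.Icc (0:ℝ) T))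
    (hFdis₂ : ContinuousOn Fdis₂ (Set.Icc (0:ℝ) T))
    (hC1₁ : ∀ t ∈ Set.Icc (0:ℝ) T0, Fdis₁ t = 0)
    (hC1₂ : ∀ t ∈ Set.Icc (0:ℝ) T0, Fdis₂ t = 0)
    (hC2₁ : ∀ n ∈ S, ∀ t ∈ Set.Icc (0:ℝ) T, Fdis₁ t n = 0)
    (hC2₂ : ∀ n ∈ S, ∀ t ∈ Set.Icc (0:ℝ) T, Fdis₂ t n = 0)
    (X₁ X₁' X₁'' X₂ X₂' X₂'' : ℝ → (Fin N → ℝ))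
    (hX₁ : ∀ t ∈ Set.Icc (0:ℝ) T, HasDerivWithinAt X₁ (X₁' t) (Set.Icc (0:ℝ) T) t)
    (hX₁' : ∀ t ∈ Set.Icc (0:ℝ) T, HasDerivWithinAt X₁' (X₁'' t) (Set.Icc (0:ℝ) T) t)
    (hX₁'' : ContinuousOn X₁'' (Set.Icc (0:ℝ) T))
    (hX₂ : ∀ t ∈ Set.Icc (0:ℝ) T, HasDerivWithinAt X₂ (X₂' t) (Set.Icc (0:ℝ) T) t)
    (hX₂' : ∀ t ∈ Set.Icc (0:ℝ) T, HasDerivWithinAt X₂' (X₂'' t) (Set.Icc (0:ℝ) T) t)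
    (hX₂'' : ContinuousOn X₂'' (Set.Icc (0:ℝ) T))
    (hODE₁ : ∀ t ∈ Set.Icc (0:ℝ) T,
      X₁'' t + η • X₁' t - (graphLaplacian G).mulVec (X₁ t) = Fsour t + Fdis₁ t)
    (hODE₂ : ∀ t ∈ Set.Icc (0:ℝ) T,
      X₂'' t + η • X₂' t - (graphLaplacian G).mulVec (X₂ t) = Fsour t + Fdis₂ t)
    (hobs : ∀ n ∈ S, ∀ t ∈ Set.Icc (0:ℝ) T, X₁ t n = X₂ t n) :
    ∀ t ∈ Set.Icc (0:ℝ) T, Fdis₁ t = Fdis₂ t := by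
  have hT' : (0:ℝ) < T := hT0.trans hT
  have hUD : UniqueDiffOn ℝ (Set.Icc (0:ℝ) T) := uniqueDiffOn_Icc hT'
  set Δ := graphLaplacian G with hΔ
  set Y : ℝ → Fin N → ℝ := fun t => X₁ t - X₂ t with hYdef
  set Y' : ℝ → Fin N → ℝ := fun t => X₁' t - X₂' t with hY'def
  set Y'' : ℝ → Fin N → ℝ := fun t => X₁'' t - X₂'' t with hY''def
  have hYd : ∀ t ∈ Set.Icc (0:ℝ) T, HasDerivWithinAt Y (Y' t) (Set.Icc (0:ℝ) T) t :=
    fun t ht => (hX₁ t ht).sub (hX₂ t ht)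
  have hYd' : ∀ t ∈ Set.Icc (0:ℝ) T, HasDerivWithinAt Y' (Y'' t) (Set.Icc (0:ℝ) T) t :=
    fun t ht => (hX₁' t ht).sub (hX₂' t ht)
  -- the ODE for the difference
  have hODE : ∀ t ∈ Set.Icc (0:ℝ) T,
      Y'' t + η • Y' t - Δ.mulVec (Y t) = Fdis₁ t - Fdis₂ t := by
    intro t ht
    have h1 := hODE₁ t ht
    have h2 := hODE₂ t ht
    have : Y'' t + η • Y' t - Δ.mulVec (Y t)
        = (X₁'' t + η • X₁' t - Δ.mulVec (X₁ t)) - (X₂'' t + η • X₂' t - Δ.mulVec (X₂ t)) := by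
      simp only [hYdef, hY'def, hY''def, Matrix.mulVec_sub, smul_sub]
      abel
    rw [this, h1, h2]
    abel
  -- Y vanishes on S
  have hYS : ∀ t ∈ Set.Icc (0:ℝ) T, ∀ n ∈ S, Y t n = 0 := by
    intro t ht n hn
    simp only [hYdef, Pi.sub_apply, sub_eq_zero]
    exact hobs n hn t ht
  -- Y' vanishes on S
  have hY'S : ∀ t ∈ Set.Icc (0:ℝ) T, ∀ n ∈ S, Y' t n = 0 := by
    intro t ht n hn
    have h1 : HasDerivWithinAt (fun s => Y s n) (Y' t n) (Set.Icc (0:ℝ) T) t :=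
      hasDerivWithinAt_pi.mp (hYd t ht) n
    have h0 : HasDerivWithinAt (fun s => Y s n) 0 (Set.Icc (0:ℝ) T) t :=
      (hasDerivWithinAt_const t _ (0:ℝ)).congr (fun s hs => hYS s hs n hn)
        (hYS t ht n hn)
    exact (hUD t ht).eq_deriv _ h1 h0
  -- Y'' vanishes on S
  have hY''S : ∀ t ∈ Set.Icc (0:ℝ) T, ∀ n ∈ S, Y'' t n = 0 := by
    intro t ht n hn
    have h1 : HasDerivWithinAt (fun s => Y' s n) (Y'' t n) (Set.Icc (0:ℝ) T) t :=
      hasDerivWithinAt_pi.mp (hYd' t ht) n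
    have h0 : HasDerivWithinAt (fun s => Y' s n) 0 (Set.Icc (0:ℝ) T) t :=
      (hasDerivWithinAt_const t _ (0:ℝ)).congr (fun s hs => hY'S s hs n hn)
        (hY'S t ht n hn)
    exact (hUD t ht).eq_deriv _ h1 h0
  -- the submatrix and injectivity
  set M := (Δ.submatrix (fun s : {x // x ∈ S} => (s : Fin N))
      (fun e : {x // x ∈ Sᶜ} => (e : Fin N))) with hMdef
  have hMinj : Function.Injective M.mulVec := by
    apply mulVec_injective_of_rank
    rw [hdomabs]
    exact (Fintype.card_coe _).symm
  -- Y vanishes everywhere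
  have hY0 : ∀ t ∈ Set.Icc (0:ℝ) T, Y t = 0 := by
    intro t ht
    -- the restriction of Y t to Sᶜ
    set w : {x // x ∈ Sᶜ} → ℝ := fun e => Y t (e : Fin N) with hwdef
    have hMw : M.mulVec w = 0 := by
      funext p
      obtain ⟨n, hn⟩ := p
      have hnS : n ∈ S := by simpa using hn
      -- row n of ODE
      have hrow : (Δ.mulVec (Y t)) n = 0 := by
        have := congrFun (hODE t ht) n
        simp only [Pi.add_apply, Pi.sub_apply, Pi.smul_apply, smul_eq_mul] at this
        rw [hY''S t ht n hnS, hY'S t ht n hnS, hC2₁ n hnS t ht, hC2₂ n hnS t ht] at this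
        linarith
      have hsum : (Δ.mulVec (Y t)) n = ∑ l ∈ Sᶜ, Δ n l * Y t l := by
        rw [Matrix.mulVec, dotProduct]
        rw [← Finset.sum_subset (Finset.subset_univ Sᶜ)]
        intro l _ hl
        have : l ∈ S := by simpa using hl
        rw [hYS t ht l this, mul_zero]
      have : M.mulVec w ⟨n, hn⟩ = ∑ l ∈ Sᶜ, Δ n l * Y t l := by
        rw [Matrix.mulVec, dotProduct]
        simp only [hMdef, Matrix.submatrix_apply, hwdef]
        exact Finset.sum_coe_sort Sᶜ (fun l => Δ n l * Y t l)
      rw [Pi.zero_apply, this, ← hsum, hrow]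
    have hw0 : w = 0 := by
      apply hMinj
      rw [hMw, Matrix.mulVec_zero]
    funext l
    by_cases hl : l ∈ S
    · exact hYS t ht l hl
    · have hl' : l ∈ Sᶜ := by simpa using hl
      have := congrFun hw0 ⟨l, hl'⟩
      simpa [hwdef] using this
  -- Y' vanishes everywhere
  have hY'0 : ∀ t ∈ Set.Icc (0:ℝ) T, Y' t = 0 := by
    intro t ht
    have h1 := hYd t ht
    have h0 : HasDerivWithinAt Y (0 : Fin N → ℝ) (Set.Icc (0:ℝ) T) t :=
      (hasDerivWithinAt_const t _ (0 : Fin N → ℝ)).congr (fun s hs => hY0 s hs)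
        (hY0 t ht)
    exact (hUD t ht).eq_deriv _ h1 h0
  -- Y'' vanishes everywhere
  have hY''0 : ∀ t ∈ Set.Icc (0:ℝ) T, Y'' t = 0 := by
    intro t ht
    have h1 := hYd' t ht
    have h0 : HasDerivWithinAt Y' (0 : Fin N → ℝ) (Set.Icc (0:ℝ) T) t :=
      (hasDerivWithinAt_const t _ (0 : Fin N → ℝ)).congr (fun s hs => hY'0 s hs)
        (hY'0 t ht)
    exact (hUD t ht).eq_deriv _ h1 h0
  -- conclude
  intro t ht
  have := hODE t ht
  rw [hY0 t ht, hY'0 t ht, hY''0 t ht] at this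
  simp only [Matrix.mulVec_zero, smul_zero, add_zero, sub_zero, zero_add] at this
  exact (sub_eq_zero.mp this.symm)
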